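/- Let p, q > 0 with p² + q² = r. For any x with e^T x = 1 and ‖x − e/r‖² ≤ 1/p² − 1/r, and any y with e^T y = 1 and ‖y − e/r‖² ≤ 1/q² − 1/r, the inner product x^T y is nonnegative. -/

import Mathlib

open scoped BigOperators RealInnerProductSpace

noncomputable def simplexCenter (r : ℕ) : EuclideanSpace ℝ (Fin r) :=
  (WithLp.equiv 2 (Fin r → ℝ)).symm fun _ => (r : ℝ)⁻¹

/-- If `p² + q² = r`, then any `x ∈ Q_p` and `y ∈ Q_q` satisfy `x^T y ≥ 0`. -/
theorem stmt6 (r : ℕ) (hr : 1 ≤ r) (p q : ℝ) (hp : 0 < p) (hq : 0 < q)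
    (hpq : p ^ 2 + q ^ 2 = (r : ℝ))
    (x y : EuclideanSpace ℝ (Fin r))
    (hx1 : ∑ i, x i = 1) (hx2 : ‖x - simplexCenter r‖ ^ 2 ≤ 1 / p ^ 2 - 1 / (r : ℝ))
    (hy1 : ∑ i, y i = 1) (hy2 : ‖y - simplexCenter r‖ ^ 2 ≤ 1 / q ^ 2 - 1 / (r : ℝ)) :
    0 ≤ ⟪x, y⟫ := by
  set c := simplexCenter r with hc
  have hr0 : (0 : ℝ) < (r : ℝ) := by exact_mod_cast hr
  have hxc : ⟪x, c⟫ = (r : ℝ)⁻¹ := by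
    simp only [PiLp.inner_apply, RCLike.inner_apply, conj_trivial, hc, simplexCenter,
      WithLp.equiv_symm_apply, WithLp.ofLp_toLp]
    rw [← Finset.mul_sum, hx1, mul_one]
  have hcy : ⟪c, y⟫ = (r : ℝ)⁻¹ := by
    simp only [PiLp.inner_apply, RCLike.inner_apply, conj_trivial, hc, simplexCenter,
      WithLp.equiv_symm_apply, WithLp.ofLp_toLp]
    rw [← Finset.sum_mul, hy1, one_mul]
  have hcc : ⟪c, c⟫ = (r : ℝ)⁻¹ := by
    simp only [PiLp.inner_apply, RCLike.inner_apply, conj_trivial, hc, simplexCenter,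
      WithLp.equiv_symm_apply, WithLp.ofLp_toLp]
    rw [Finset.sum_const, Finset.card_univ, Fintype.card_fin, nsmul_eq_mul]
    field_simp
  have hexp : ⟪x - c, y - c⟫ = ⟪x, y⟫ - (r : ℝ)⁻¹ := by
    rw [inner_sub_left, inner_sub_right, inner_sub_right, hxc, hcy, hcc]
    ring
  have hxn : 0 ≤ ‖x - c‖ := norm_nonneg _
  have hyn : 0 ≤ ‖y - c‖ := norm_nonneg _
  have hprod : ‖x - c‖ * ‖y - c‖ ≤ (r : ℝ)⁻¹ := by
    have hsq : (‖x - c‖ * ‖y - c‖) ^ 2 ≤ ((r : ℝ)⁻¹) ^ 2 := by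
      have h1 : (‖x - c‖ * ‖y - c‖) ^ 2 = ‖x - c‖ ^ 2 * ‖y - c‖ ^ 2 := by ring
      have key : (1 / p ^ 2 - 1 / (r : ℝ)) * (1 / q ^ 2 - 1 / (r : ℝ)) = ((r : ℝ)⁻¹) ^ 2 := by
        rw [show (r : ℝ) = p ^ 2 + q ^ 2 from hpq.symm]
        field_simp
        ring
      rw [h1, ← key]
      exact mul_le_mul hx2 hy2 (sq_nonneg _) (le_trans (sq_nonneg _) hx2)
    nlinarith [hsq, mul_nonneg hxn hyn, inv_pos.mpr hr0]
  have habs := abs_real_inner_le_norm (x - c) (y - c)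
  have hcs : -(‖x - c‖ * ‖y - c‖) ≤ ⟪x - c, y - c⟫ := by
    have := neg_abs_le (⟪x - c, y - c⟫ : ℝ)
    linarith
  have : -(r : ℝ)⁻¹ ≤ ⟪x, y⟫ - (r : ℝ)⁻¹ := by
    rw [← hexp]
    linarith
  linarith
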